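/- Let f be a connectivity function on a finite set E, and let A, B ⊆ E with A^c ∩ B^c ≠ ∅ and let F minimize f over sets with A∖B ⊆ F ⊆ (B∖A)^c. Then at least one of F ∩ (A^c ∩ B^c) and F^c ∩ (A^c ∩ B^c) is nonempty, and furthermore (α∖F|A∪F) = (α∖F_A|A∪F_A) where F_A = F ∩ A^c ∩ B^c, for any partition (α|A). -/
import Mathlib


open Set

variable {E : Type*}

/-- A partition of `E`: pairwise disjoint nonempty parts covering `E`. -/
def IsPartitionOf (μ : Set (Set E)) : Prop :=
  (∀ A ∈ μ, A.Nonempty) ∧ μ.PairwiseDisjoint id ∧ ⋃₀ μ = Set.univ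

/-- The least superset of `P` closed under merging of partitions:
from `(α|A)` and `(Aᶜ|β)` one obtains `(α|β)`. -/
inductive MergeClosure (P : Set (Set (Set E))) : Set (Set E) → Prop
  | base {μ : Set (Set E)} : μ ∈ P → MergeClosure P μ
  | merge {α β : Set (Set E)} {A : Set E} (hA : A ∉ α) (hB : Aᶜ ∉ β) :
      MergeClosure P (insert A α) → MergeClosure P (insert Aᶜ β) →
      MergeClosure P (α ∪ β)

/-- A `Q`-bramble: pairwise intersecting sets meeting every partition in `Q`. -/
def IsBramble (Q : Set (Set (Set E))) (Br : Set (Set E)) : Prop :=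
  (∀ X ∈ Br, ∀ Y ∈ Br, (X ∩ Y).Nonempty) ∧ ∀ μ ∈ Q, ∃ X ∈ μ, X ∈ Br

/-- Deletion: remove one element from one member, dropping it if it becomes empty. -/
def DelStep (β α : Set (Set E)) : Prop :=
  ∃ B ∈ β, ∃ b ∈ B, α = (β \ {B}) ∪ {X | X = B \ {b} ∧ X.Nonempty}

/-- Partition step: replace one member by a partition of it. -/
def SplitStep (β α : Set (Set E)) : Prop :=
  ∃ B ∈ β, ∃ δ : Set (Set E), (∀ D ∈ δ, D.Nonempty) ∧ δ.PairwiseDisjoint id ∧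
    ⋃₀ δ = B ∧ α = (β \ {B}) ∪ δ

/-- `α` is finer than `β`: obtained by a sequence of deletions and partitions. -/
def Finer (α β : Set (Set E)) : Prop :=
  Relation.ReflTransGen (fun x y => DelStep x y ∨ SplitStep x y) β α

/-- `α` is strongly finer than `β`: obtained by deletions only. -/
def StronglyFiner (α β : Set (Set E)) : Prop :=
  Relation.ReflTransGen DelStep β α

/-- A family of small sets: downward closed. -/
def DownClosed (S : Set (Set E)) : Prop := ∀ X ∈ S, ∀ Y, Y ⊆ X → Y ∈ S

def Refining (Q : Set (Set (Set E))) : Prop :=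
  ∀ (α β : Set (Set E)) (A B : Set E), A ∉ α → B ∉ β →
    insert A α ∈ Q → insert B β ∈ Q → A ∩ B = ∅ →
    ∃ μ ∈ Q, Finer μ (α ∪ β)

def Dualising (Q : Set (Set (Set E))) : Prop :=
  ∀ S : Set (Set E), DownClosed S →
    (∃ μ ∈ Q, ∀ X ∈ μ, X ∈ S) ∨ (∃ Br, IsBramble Q Br ∧ ∀ X ∈ Br, X ∉ S)

/-- `α∖F`: remove the elements of `F` from every part, discarding emptied parts. -/
def RemoveF (α : Set (Set E)) (F : Set E) : Set (Set E) :=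
  {X | ∃ A ∈ α, X = A \ F ∧ X.Nonempty}

def Pushing (P : Set (Set (Set E))) : Prop :=
  ∀ (α β : Set (Set E)) (A B : Set E), A ∉ α → B ∉ β →
    insert A α ∈ P → insert B β ∈ P → (Aᶜ ∩ Bᶜ).Nonempty →
    ∃ F : Set E, F.Nonempty ∧ F ⊆ Aᶜ ∩ Bᶜ ∧
      (insert (A ∪ F) (RemoveF α F) ∈ P ∨ insert (B ∪ F) (RemoveF β F) ∈ P)

/-- Weakly submodular partition function (new sense). -/
def WeaklySubmodular (Ψ : Set (Set E) → EReal) : Prop :=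
  ∀ (α β : Set (Set E)) (A B : Set E), A ∉ α → B ∉ β →
    IsPartitionOf (insert A α) → IsPartitionOf (insert B β) →
    (Aᶜ ∩ Bᶜ).Nonempty →
    ∃ F : Set E, F.Nonempty ∧ F ⊆ Aᶜ ∩ Bᶜ ∧
      (Ψ (insert (A ∪ F) (RemoveF α F)) ≤ Ψ (insert A α) ∨
       Ψ (insert (B ∪ F) (RemoveF β F)) ≤ Ψ (insert B β))

/-- Submodular partition function. -/
def SubmodularPF (Ψ : Set (Set E) → EReal) : Prop :=
  ∀ (α β : Set (Set E)) (A B : Set E), A ∉ α → B ∉ β →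
    IsPartitionOf (insert A α) → IsPartitionOf (insert B β) →
    Ψ (insert (A ∪ Bᶜ) (RemoveF α Bᶜ)) + Ψ (insert (B ∪ Aᶜ) (RemoveF β Aᶜ))
      ≤ Ψ (insert A α) + Ψ (insert B β)

/-- The overlap: elements belonging to at least two members. -/
def Overlap (α : Set (Set E)) : Set E :=
  {x | ∃ X ∈ α, ∃ Y ∈ α, X ≠ Y ∧ x ∈ X ∧ x ∈ Y}

/-- A connectivity function: symmetric and submodular. -/
def ConnFn (f : Set E → EReal) : Prop :=
  (∀ X, f X = f Xᶜ) ∧ ∀ X Y, f (X ∪ Y) + f (X ∩ Y) ≤ f X + f Y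

/-- The partition function `max_f`. -/
noncomputable def maxPF (f : Set E → EReal) (μ : Set (Set E)) : EReal := sSup (f '' μ)

/-- with `F` minimizing `f` among `A∖B ⊆ F ⊆ (B∖A)ᶜ` and
`Aᶜ ∩ Bᶜ ≠ ∅`, at least one of `F ∩ (Aᶜ∩Bᶜ)` and `Fᶜ ∩ (Aᶜ∩Bᶜ)` is nonempty,
and `(α∖F|A∪F) = (α∖F_A|A∪F_A)` with `F_A = F ∩ Aᶜ ∩ Bᶜ`. -/
theorem restrict_to_overlap [Finite E]
    (f : Set E → EReal) (hf : ConnFn f)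
    (A B F : Set E) (hov : (Aᶜ ∩ Bᶜ).Nonempty)
    (hF1 : A \ B ⊆ F) (hF2 : F ⊆ (B \ A)ᶜ)
    (hmin : ∀ G, A \ B ⊆ G → G ⊆ (B \ A)ᶜ → f F ≤ f G) :
    ((F ∩ (Aᶜ ∩ Bᶜ)).Nonempty ∨ (Fᶜ ∩ (Aᶜ ∩ Bᶜ)).Nonempty) ∧
    ∀ α : Set (Set E), A ∉ α → IsPartitionOf (insert A α) →
      insert (A ∪ F) (RemoveF α F) =
        insert (A ∪ (F ∩ (Aᶜ ∩ Bᶜ))) (RemoveF α (F ∩ (Aᶜ ∩ Bᶜ))) := by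
  have hFA : F \ (F ∩ (Aᶜ ∩ Bᶜ)) ⊆ A := by
    intro x hx
    by_contra hA
    have hxB : x ∉ B := by
      intro hB
      exact hF2 hx.1 ⟨hB, hA⟩
    exact hx.2 ⟨hx.1, hA, hxB⟩
  constructor
  · obtain ⟨x, hx⟩ := hov
    by_cases hxF : x ∈ F
    · exact Or.inl ⟨x, hxF, hx⟩
    · exact Or.inr ⟨x, hxF, hx⟩
  · intro α hAα hpart
    have hU : A ∪ F = A ∪ (F ∩ (Aᶜ ∩ Bᶜ)) := by
      apply Set.eq_of_subset_of_subset
      · rintro x (hx | hx)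
        · exact Or.inl hx
        · by_cases hxA : x ∈ F ∩ (Aᶜ ∩ Bᶜ)
          · exact Or.inr hxA
          · exact Or.inl (hFA ⟨hx, hxA⟩)
      · rintro x (hx | hx)
        · exact Or.inl hx
        · exact Or.inr hx.1
    have hR : RemoveF α F = RemoveF α (F ∩ (Aᶜ ∩ Bᶜ)) := by
      have hdisj : ∀ X ∈ α, X ∩ A = ∅ := by
        intro X hX
        have hne : X ≠ A := fun h => hAα (h ▸ hX)
        have := hpart.2.1 (Set.mem_insert_of_mem A hX) (Set.mem_insert A α) hne
        simpa [Set.disjoint_iff_inter_eq_empty] using this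
      have key : ∀ X ∈ α, X \ F = X \ (F ∩ (Aᶜ ∩ Bᶜ)) := by
        intro X hX
        apply Set.eq_of_subset_of_subset
        · exact Set.diff_subset_diff_right Set.inter_subset_left
        · rintro x ⟨hxX, hxF⟩
          refine ⟨hxX, fun hxF' => ?_⟩
          by_cases h : x ∈ F ∩ (Aᶜ ∩ Bᶜ)
          · exact hxF h
          · have hxA : x ∈ A := hFA ⟨hxF', h⟩
            have hempty := hdisj X hX
            have : x ∈ X ∩ A := ⟨hxX, hxA⟩
            rw [hempty] at this
            exact this
      unfold RemoveF
      ext Y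
      constructor
      · rintro ⟨X, hX, rfl, hne⟩
        exact ⟨X, hX, (key X hX).symm ▸ rfl, hne⟩
      · rintro ⟨X, hX, rfl, hne⟩
        exact ⟨X, hX, (key X hX).symm, hne⟩
    rw [hU, hR]
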